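/- Let s be the k-th avalanche of KSPM(D) and suppose there is a column l with all of l,…,l+D−2 fired in s. If p_i = s_t is a peak with p_i ≥ l+D−1 and p_{i−1} is the previous peak, then the avalanche continues for at least p_i − p_{i−1} − 1 further steps, and for every t' with t < t' ≤ t + p_i − p_{i−1} − 1, s_{t'} = s_{t'−1} − 1 (the columns strictly between the two peaks are fired in decreasing order immediately after p_i). -/

import Mathlib

/-- Effect of firing column `i` in KSPM(D), on height-difference configurations. -/
def step (D : ℕ) (σ : ℕ → ℕ) (i : ℕ) : ℕ → ℕ :=
  fun j =>
    if j = i then σ i - D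
    else if j + 1 = i then σ j + (D - 1)
    else if j = i + D - 1 then σ j + 1
    else σ j

/-- Transition on column `i`: `σ →ᵢ σ'`. -/
def KTrans (D : ℕ) (σ : ℕ → ℕ) (i : ℕ) (σ' : ℕ → ℕ) : Prop :=
  D ≤ σ i ∧ σ' = step D σ i

/-- A strategy (list of fired columns) is legal from `σ`. -/
def Legal (D : ℕ) : (ℕ → ℕ) → List ℕ → Prop
  | _, [] => True
  | σ, i :: s => D ≤ σ i ∧ Legal D (step D σ i) s

/-- Configuration obtained by applying a strategy. -/
def applyStrat (D : ℕ) : (ℕ → ℕ) → List ℕ → (ℕ → ℕ)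
  | σ, [] => σ
  | σ, i :: s => applyStrat D (step D σ i) s

/-- Reachability `σ →* σ'`. -/
def Reaches (D : ℕ) (σ σ' : ℕ → ℕ) : Prop :=
  ∃ s : List ℕ, Legal D σ s ∧ applyStrat D σ s = σ'

/-- A configuration is stable (a fixed point) if no transition is possible. -/
def Stable (D : ℕ) (σ : ℕ → ℕ) : Prop := ∀ i, σ i < D

/-- Initial configuration: `N` grains stacked on column 0 (height differences `(N,0,0,…)`). -/
def initConf (N : ℕ) : ℕ → ℕ := fun j => if j = 0 then N else 0

/-- `τ = π(N)`: the stable configuration reachable from `N` stacked grains. -/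
def IsPi (D N : ℕ) (τ : ℕ → ℕ) : Prop := Reaches D (initConf N) τ ∧ Stable D τ

/-- `σ^{↓0}`: add one grain on column 0. -/
def addGrain (σ : ℕ → ℕ) : ℕ → ℕ := Function.update σ 0 (σ 0 + 1)

/-- `s` is the leftmost (lexicographically minimal) strategy from `τ^{↓0}` to `τ'`. -/
def IsAvalancheFor (D : ℕ) (τ τ' : ℕ → ℕ) (s : List ℕ) : Prop :=
  Legal D (addGrain τ) s ∧ applyStrat D (addGrain τ) s = τ' ∧
    ∀ s' : List ℕ, Legal D (addGrain τ) s' → applyStrat D (addGrain τ) s' = τ' →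
      ¬ List.Lex (· < ·) s' s

/-- `s` is the `k`-th avalanche: leftmost strategy from `π(k-1)^{↓0}` to `π(k)`. -/
def IsAvalanche (D k : ℕ) (s : List ℕ) : Prop :=
  ∃ τ τ' : ℕ → ℕ, IsPi D (k - 1) τ ∧ IsPi D k τ' ∧ IsAvalancheFor D τ τ' s

/-- Position `t` (0-indexed) of strategy `s` is a peak: it exceeds all earlier fired columns. -/
def IsPeak (s : List ℕ) (t : ℕ) : Prop :=
  t < s.length ∧ ∀ t' < t, s.getD t' 0 < s.getD t 0

/-- Column `p` is a peak of `s`. -/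
def IsPeakVal (s : List ℕ) (p : ℕ) : Prop :=
  ∃ t : ℕ, IsPeak s t ∧ s.getD t 0 = p

namespace KSPMaux

theorem applyStrat_append (D : ℕ) (a b : List ℕ) (σ : ℕ → ℕ) :
    applyStrat D σ (a ++ b) = applyStrat D (applyStrat D σ a) b := by
  induction a generalizing σ with
  | nil => rfl
  | cons x xs ih => simp [applyStrat, ih]

theorem legal_append (D : ℕ) (a b : List ℕ) (σ : ℕ → ℕ) :
    Legal D σ (a ++ b) ↔ Legal D σ a ∧ Legal D (applyStrat D σ a) b := by
  induction a generalizing σ with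
  | nil => simp [Legal, applyStrat]
  | cons x xs ih => simp [Legal, applyStrat, ih, and_assoc]

theorem step_le (D : ℕ) (σ : ℕ → ℕ) (i c : ℕ) (h : c ≠ i) : σ c ≤ step D σ i c := by
  unfold step
  split_ifs <;> omega

theorem step_comm (D : ℕ) (σ : ℕ → ℕ) (i j : ℕ) (hD : 1 ≤ D) (hij : i ≠ j)
    (hi : D ≤ σ i) (hj : D ≤ σ j) :
    step D (step D σ i) j = step D (step D σ j) i := by
  funext c
  rcases eq_or_ne c i with rfl | h1
  · simp only [step]; split_ifs <;> omega
  rcases eq_or_ne c j with rfl | h2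
  · simp only [step]; split_ifs <;> omega
  · simp only [step]; split_ifs <;> omega


theorem applyStrat_le (D : ℕ) (l : List ℕ) (σ : ℕ → ℕ) (c : ℕ) (h : c ∉ l) :
    σ c ≤ applyStrat D σ l c := by
  induction l generalizing σ with
  | nil => exact le_refl _
  | cons x xs ih =>
    simp only [List.mem_cons, not_or] at h
    calc σ c ≤ step D σ x c := step_le D σ x c h.1
    _ ≤ _ := ih _ h.2

theorem applyStrat_untouched (D : ℕ) (l : List ℕ) (σ : ℕ → ℕ) (c : ℕ)
    (h : ∀ f ∈ l, c + 1 < f) : applyStrat D σ l c = σ c := by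
  induction l generalizing σ with
  | nil => rfl
  | cons x xs ih =>
    have hx := h x (by simp)
    have : step D σ x c = σ c := by
      unfold step; split_ifs <;> omega
    rw [applyStrat, ih _ (fun f hf => h f (by simp [hf])), this]

theorem value_formula (D : ℕ) (hD : 2 ≤ D) (l : List ℕ) (σ : ℕ → ℕ)
    (hleg : Legal D σ l) (c : ℕ) :
    applyStrat D σ l c + D * l.count c
      = σ c + (D - 1) * l.count (c + 1) + l.countP (fun i => i + D - 1 = c) := by
  induction l generalizing σ with
  | nil => simp [applyStrat]
  | cons x xs ih =>
    obtain ⟨hx, hleg'⟩ := hleg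
    have ihx := ih (step D σ x) hleg'
    rw [applyStrat]
    rw [List.count_cons, List.count_cons, List.countP_cons]
    rcases eq_or_ne x c with rfl | h1
    · rw [show step D σ x x = σ x - D by unfold step; simp] at ihx
      simp only [beq_iff_eq, decide_eq_true_eq]
      split_ifs <;> simp only [Nat.mul_add, Nat.mul_one, Nat.add_zero] <;> omega
    rcases eq_or_ne x (c + 1) with rfl | h2
    · rw [show step D σ (c + 1) c = σ c + (D - 1) by
        unfold step; rw [if_neg (by omega), if_pos rfl]] at ihx
      simp only [beq_iff_eq, decide_eq_true_eq]
      split_ifs <;> simp only [Nat.mul_add, Nat.mul_one, Nat.add_zero] <;> omega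
    by_cases h3 : x + D - 1 = c
    · rw [show step D σ x c = σ c + 1 by
        unfold step; rw [if_neg (Ne.symm h1), if_neg (by omega), if_pos (by omega)]] at ihx
      simp only [beq_iff_eq, decide_eq_true_eq]
      split_ifs <;> simp only [Nat.mul_add, Nat.mul_one, Nat.add_zero] <;> omega
    · rw [show step D σ x c = σ c by
        unfold step; rw [if_neg (Ne.symm h1), if_neg (by omega), if_neg (by omega)]] at ihx
      simp only [beq_iff_eq, decide_eq_true_eq]
      split_ifs <;> simp only [Nat.mul_add, Nat.mul_one, Nat.add_zero] <;> omega

theorem countP_le_one (p : ℕ → Bool) (l : List ℕ)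
    (hp : ∀ a b, p a → p b → a = b) (hl : l.Nodup) : l.countP p ≤ 1 := by
  induction l with
  | nil => simp
  | cons x xs ih =>
    rw [List.countP_cons]
    rcases List.nodup_cons.1 hl with ⟨hx, hxs⟩
    by_cases hpx : p x
    · have : xs.countP p = 0 := by
        rw [List.countP_eq_zero]
        intro b hb hpb
        exact hx (hp b x hpb hpx ▸ hb)
      simp [this, hpx]
    · simp [hpx, ih hxs]

theorem exchange (D : ℕ) (hD : 2 ≤ D) (c : ℕ) :
    ∀ (l : List ℕ) (σ : ℕ → ℕ), Legal D σ l → D ≤ σ c →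
      Stable D (applyStrat D σ l) →
      ∃ l', Legal D σ (c :: l') ∧ applyStrat D σ (c :: l') = applyStrat D σ l := by
  intro l
  induction l with
  | nil =>
    intro σ _ hc hst
    exact absurd (hst c) (by simp [applyStrat]; omega)
  | cons a rest ih =>
    intro σ hleg hc hst
    obtain ⟨ha, hleg'⟩ := hleg
    rcases eq_or_ne a c with rfl | hac
    · exact ⟨rest, ⟨hc, hleg'⟩, rfl⟩
    · have hc' : D ≤ step D σ a c := le_trans hc (step_le D σ a c (Ne.symm hac))
      have hst' : Stable D (applyStrat D (step D σ a) rest) := hst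
      obtain ⟨l', ⟨hcl, hlegl⟩, happ⟩ := ih (step D σ a) hleg' hc' hst'
      have hcomm : step D (step D σ c) a = step D (step D σ a) c :=
        step_comm D σ c a (by omega) (Ne.symm hac) hc ha
      refine ⟨a :: l', ⟨hc, ?_, ?_⟩, ?_⟩
      · exact le_trans ha (step_le D σ c a hac)
      · show Legal D (step D (step D σ c) a) l'
        rw [hcomm]; exact hlegl
      · show applyStrat D (step D (step D σ c) a) l' = _
        rw [hcomm]; exact happ

theorem lex_append (p x y : List ℕ) (a b : ℕ) (h : a < b) :
    List.Lex (· < ·) (p ++ a :: x) (p ++ b :: y) := by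
  induction p with
  | nil => exact List.Lex.rel h
  | cons q qs ih => exact List.Lex.cons ih

theorem mem_take_iff (s : List ℕ) (u c : ℕ) :
    c ∈ s.take u ↔ ∃ z, z < u ∧ z < s.length ∧ s.getD z 0 = c := by
  constructor
  · intro h
    obtain ⟨i, hi, hEq⟩ := List.mem_iff_getElem.1 h
    have hlen : (s.take u).length = min u s.length := by simp
    refine ⟨i, by omega, by omega, ?_⟩
    rw [List.getD_eq_getElem s 0 (by omega)]
    rw [List.getElem_take] at hEq
    exact hEq
  · rintro ⟨z, hzu, hzlen, hgd⟩
    refine List.mem_iff_getElem.2 ⟨z, by simp; omega, ?_⟩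
    rw [List.getElem_take]
    rw [List.getD_eq_getElem s 0 hzlen] at hgd
    exact hgd

theorem mem_drop_take_iff (s : List ℕ) (a b c : ℕ) :
    c ∈ (s.take b).drop a ↔ ∃ z, a ≤ z ∧ z < b ∧ z < s.length ∧ s.getD z 0 = c := by
  constructor
  · intro h
    obtain ⟨i, hi, hEq⟩ := List.mem_iff_getElem.1 h
    have hlen : ((s.take b).drop a).length = min b s.length - a := by simp
    refine ⟨a + i, by omega, by omega, by omega, ?_⟩
    rw [List.getD_eq_getElem s 0 (by omega)]
    rw [List.getElem_drop, List.getElem_take] at hEq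
    exact hEq
  · rintro ⟨z, haz, hzb, hzlen, hgd⟩
    obtain ⟨w, rfl⟩ : ∃ w, z = a + w := ⟨z - a, by omega⟩
    refine List.mem_iff_getElem.2 ⟨w, by simp; omega, ?_⟩
    rw [List.getElem_drop, List.getElem_take]
    rw [List.getD_eq_getElem s 0 hzlen] at hgd
    exact hgd

theorem take_eq_take_append (s : List ℕ) (a b : ℕ) (hab : a ≤ b) :
    s.take b = s.take a ++ (s.take b).drop a := by
  conv_lhs => rw [← List.take_append_drop a (s.take b)]
  rw [List.take_take, min_eq_left hab]

end KSPMaux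

/-- After a peak p_i = s_t with p_i ≥ l + D - 1, the avalanche lasts at least
p_i - p_{i-1} - 1 further steps, which fire consecutively decreasing columns. -/
theorem after_peak_decreasing (D k l : ℕ) (hD : 2 ≤ D) (hk : 1 ≤ k)
    (s : List ℕ) (τ τ' : ℕ → ℕ) (hτ : IsPi D (k - 1) τ) (hτ' : IsPi D k τ')
    (hav : IsAvalancheFor D τ τ' s)
    (hl : ∀ i : ℕ, l ≤ i → i < l + D - 1 → i ∈ s)
    (t t0 pi pim : ℕ) (hpeak : IsPeak s t) (hpi : s.getD t 0 = pi)
    (hpige : l + D - 1 ≤ pi)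
    (ht0 : t0 < t) (hpeak0 : IsPeak s t0) (hpim : s.getD t0 0 = pim)
    (hprev : ∀ u : ℕ, t0 < u → u < t → ¬ IsPeak s u) :
    t + (pi - pim) ≤ s.length ∧
      ∀ u : ℕ, t < u → u ≤ t + (pi - pim) - 1 →
        s.getD u 0 = s.getD (u - 1) 0 - 1 := by
  classical
  obtain ⟨hlegal, happly, hmin⟩ := hav
  have hstabτ : Stable D τ := hτ.2
  have hstabτ' : Stable D τ' := hτ'.2
  set σ0 : ℕ → ℕ := addGrain τ with hσ0def
  have hσ0_ne : ∀ c, c ≠ 0 → σ0 c = τ c := by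
    intro c hc; simp [hσ0def, addGrain, Function.update_of_ne hc]
  have hσ0_le : ∀ c, σ0 c ≤ D := by
    intro c
    rcases eq_or_ne c 0 with rfl | hc
    · have := hstabτ 0
      simp only [hσ0def, addGrain, Function.update_self]
      omega
    · rw [hσ0_ne c hc]; exact le_of_lt (hstabτ c)
  have hsplit : ∀ v, Legal D σ0 (s.take v) ∧
      Legal D (applyStrat D σ0 (s.take v)) (s.drop v) :=
    fun v => (KSPMaux.legal_append D (s.take v) (s.drop v) σ0).1
      (by rw [List.take_append_drop]; exact hlegal)
  have happrefix : ∀ v,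
      applyStrat D (applyStrat D σ0 (s.take v)) (s.drop v) = τ' := by
    intro v
    rw [← KSPMaux.applyStrat_append, List.take_append_drop]
    exact happly
  have hlegat : ∀ v, v < s.length → D ≤ applyStrat D σ0 (s.take v) (s.getD v 0) := by
    intro v hv
    have h2 := (hsplit v).2
    rw [List.drop_eq_getElem_cons hv] at h2
    rw [List.getD_eq_getElem s 0 hv]
    exact h2.1
  have hvalue : ∀ v c, applyStrat D σ0 (s.take v) c + D * (s.take v).count c
      = σ0 c + (D - 1) * (s.take v).count (c + 1)
        + (s.take v).countP (fun i => i + D - 1 = c) :=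
    fun v c => KSPMaux.value_formula D hD (s.take v) σ0 (hsplit v).1 c
  have hnodup : s.Nodup := by
    by_contra hnd
    have hex : ∃ w, ¬ (s.take (w + 1)).Nodup :=
      ⟨s.length, by rwa [List.take_of_length_le (by omega)]⟩
    set w := Nat.find hex with hwdef
    have hPw : ¬ (s.take (w + 1)).Nodup := Nat.find_spec hex
    have htw : (s.take w).Nodup := by
      rcases Nat.eq_zero_or_pos w with h0 | h1
      · rw [h0]; simp
      · have := Nat.find_min hex (m := w - 1) (by omega)
        rw [show w - 1 + 1 = w by omega] at this
        exact not_not.1 this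
    have hwlen : w < s.length := by
      by_contra hge
      push_neg at hge
      rw [List.take_of_length_le (by omega)] at hPw
      rw [List.take_of_length_le hge] at htw
      exact hPw htw
    have htsucc : s.take (w + 1) = s.take w ++ [s.getD w 0] := by
      rw [List.take_succ, List.getElem?_eq_getElem hwlen]
      rw [List.getD_eq_getElem s 0 hwlen]
      rfl
    have hmem : s.getD w 0 ∈ s.take w := by
      by_contra hnm
      apply hPw
      rw [htsucc]
      refine List.Nodup.append htw (List.nodup_singleton _) ?_
      intro a ha hb
      rw [List.mem_singleton] at hb
      exact hnm (hb ▸ ha)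
    set c := s.getD w 0 with hcdef
    have hcnt : 1 ≤ (s.take w).count c := List.count_pos_iff.2 hmem
    have hcnt1 : (s.take w).count (c + 1) ≤ 1 := List.nodup_iff_count_le_one.1 htw (c + 1)
    have hcntP : (s.take w).countP (fun i => i + D - 1 = c) ≤ 1 :=
      KSPMaux.countP_le_one _ _ (by intro a b ha hb; simp at ha hb; omega) htw
    have hlv := hlegat w hwlen
    rw [← hcdef] at hlv
    have hv := hvalue w c
    have hmul1 : D * 1 ≤ D * (s.take w).count c := Nat.mul_le_mul_left D hcnt
    have hmul2 : (D - 1) * (s.take w).count (c + 1) ≤ (D - 1) * 1 :=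
      Nat.mul_le_mul_left (D - 1) hcnt1
    rcases eq_or_ne c 0 with hc0 | hc0
    · have hcP0 : (s.take w).countP (fun i => i + D - 1 = c) = 0 := by
        rw [List.countP_eq_zero]
        intro a _
        simp only [decide_eq_true_eq]
        omega
      have := hσ0_le c
      omega
    · have := hstabτ c
      rw [hσ0_ne c hc0] at hv
      omega
  have hgreedy : ∀ v c, v < s.length → D ≤ applyStrat D σ0 (s.take v) c →
      s.getD v 0 ≤ c := by
    intro v c hv hc
    by_contra hlt
    push_neg at hlt
    have hstable_end : Stable D (applyStrat D (applyStrat D σ0 (s.take v)) (s.drop v)) := by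
      rw [happrefix v]; exact hstabτ'
    obtain ⟨l', hleg', happ'⟩ :=
      KSPMaux.exchange D hD c (s.drop v) _ (hsplit v).2 hc hstable_end
    have hsdecomp : s = s.take v ++ s.getD v 0 :: s.drop (v + 1) := by
      conv_lhs => rw [← List.take_append_drop v s]
      rw [List.drop_eq_getElem_cons hv, List.getD_eq_getElem s 0 hv]
    refine hmin (s.take v ++ c :: l') ?_ ?_ ?_
    · rw [KSPMaux.legal_append]
      exact ⟨(hsplit v).1, hleg'⟩
    · rw [KSPMaux.applyStrat_append, happ', happrefix v]
    · have hlex := KSPMaux.lex_append (s.take v) l' (s.drop (v + 1)) c (s.getD v 0) hlt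
      rw [← hsdecomp] at hlex
      exact hlex
  have hfirst : 0 < s.length → s.getD 0 0 = 0 := by
    intro h0
    have hle := hlegat 0 h0
    rw [List.take_zero] at hle
    by_contra hne
    have : applyStrat D σ0 [] (s.getD 0 0) = σ0 (s.getD 0 0) := rfl
    rw [this, hσ0_ne _ hne] at hle
    exact absurd hle (by have := hstabτ (s.getD 0 0); omega)
  have hmem_idx : ∀ c, c ∈ s → ∃ z, z < s.length ∧ s.getD z 0 = c := by
    intro c hc
    obtain ⟨z, hz, hEq⟩ := List.mem_iff_getElem.1 hc
    exact ⟨z, hz, by rw [List.getD_eq_getElem s 0 hz]; exact hEq⟩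
  have hgd_mem : ∀ v, v < s.length → s.getD v 0 ∈ s := by
    intro v hv
    rw [List.getD_eq_getElem s 0 hv]
    exact List.getElem_mem _
  have hcount0 : ∀ v c, (∀ z, z < v → z < s.length → s.getD z 0 ≠ c) →
      (s.take v).count c = 0 := by
    intro v c h
    rw [List.count_eq_zero]
    intro hmem
    obtain ⟨z, hz1, hz2, hz3⟩ := (KSPMaux.mem_take_iff s v c).1 hmem
    exact h z hz1 hz2 hz3
  have hcountP0 : ∀ v c, (∀ z, z < v → z < s.length → s.getD z 0 + D - 1 ≠ c) →
      (s.take v).countP (fun i => i + D - 1 = c) = 0 := by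
    intro v c h
    rw [List.countP_eq_zero]
    intro x hx
    obtain ⟨z, hz1, hz2, hz3⟩ := (KSPMaux.mem_take_iff s v x).1 hx
    simp only [decide_eq_true_eq]
    rw [← hz3]
    exact h z hz1 hz2
  have hcountPmono : ∀ (p : ℕ → Bool) a b, a ≤ b →
      (s.take a).countP p ≤ (s.take b).countP p := by
    intro p a b hab
    conv_rhs => rw [KSPMaux.take_eq_take_append s a b hab]
    rw [List.countP_append]
    omega
  have hcnt_le1 : ∀ v c, (s.take v).count c ≤ 1 := fun v c =>
    List.nodup_iff_count_le_one.1 ((List.take_sublist v s).nodup hnodup) c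
  have huntouched : ∀ a b c, a ≤ b →
      (∀ z, a ≤ z → z < b → z < s.length → c + 1 < s.getD z 0) →
      applyStrat D σ0 (s.take b) c = applyStrat D σ0 (s.take a) c := by
    intro a b c hab hz
    conv_lhs => rw [KSPMaux.take_eq_take_append s a b hab]
    rw [KSPMaux.applyStrat_append]
    apply KSPMaux.applyStrat_untouched
    intro f hf
    obtain ⟨z, hz1, hz2, hz3, hz4⟩ := (KSPMaux.mem_drop_take_iff s a b f).1 hf
    exact hz4 ▸ hz z hz1 hz2 hz3
  have key : ∀ u, IsPeak s u →
      (∀ ta pa, IsPeak s ta → ta < u → s.getD ta 0 = pa →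
        (∀ v, ta < v → v < u → ¬ IsPeak s v) → l + D - 1 ≤ s.getD u 0 →
        ∀ m, m + pa + 1 ≤ s.getD u 0 →
          u + m < s.length ∧ s.getD (u + m) 0 = s.getD u 0 - m)
      ∧ (l ≤ s.getD u 0 → ∀ c, l ≤ c → c ≤ s.getD u 0 → c ∈ s) := by
    intro u
    induction u using Nat.strong_induction_on with
    | _ u ihu =>
    intro hpk
    have hulen : u < s.length := hpk.1
    have hdesc : ∀ ta pa, IsPeak s ta → ta < u → s.getD ta 0 = pa →
        (∀ v, ta < v → v < u → ¬ IsPeak s v) → l + D - 1 ≤ s.getD u 0 →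
        ∀ m, m + pa + 1 ≤ s.getD u 0 →
          u + m < s.length ∧ s.getD (u + m) 0 = s.getD u 0 - m := by
      intro ta pa hpka hta hpa hprv hge
      set q := s.getD u 0 with hq
      have F1 : ∀ v, v < u → s.getD v 0 ≤ pa := by
        intro v
        induction v using Nat.strong_induction_on with
        | _ v ihv =>
        intro hvu
        rcases lt_trichotomy v ta with h | h | h
        · have h2 := hpka.2 v h
          omega
        · rw [h, hpa]
        · have hnp := hprv v h hvu
          rw [IsPeak, not_and_or] at hnp
          rcases hnp with h1 | h2
          · exact absurd (lt_trans hvu hulen) h1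
          · push_neg at h2
            obtain ⟨t', ht', hle'⟩ := h2
            exact le_trans hle' (ihv t' ht' (lt_trans ht' hvu))
      have hpalt : pa < q := by
        have := hpk.2 ta hta
        omega
      have hcq : (s.take u).count q = 0 :=
        hcount0 u q (fun z hz _ => by have := F1 z hz; omega)
      have hcq1 : (s.take u).count (q + 1) = 0 :=
        hcount0 u (q + 1) (fun z hz _ => by have := F1 z hz; omega)
      have hvq := hvalue u q
      rw [hcq, hcq1, hσ0_ne q (by omega)] at hvq
      have hlq := hlegat u hulen
      rw [← hq] at hlq
      have hcountPq : 1 ≤ (s.take u).countP (fun i => i + D - 1 = q) := by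
        have := hstabτ q
        omega
      obtain ⟨x, hxmem, hxp⟩ := List.countP_pos_iff.1
        (show 0 < (s.take u).countP (fun i => i + D - 1 = q) by omega)
      obtain ⟨z, hzu, hzlen, hzgd⟩ := (KSPMaux.mem_take_iff s u x).1 hxmem
      simp only [decide_eq_true_eq] at hxp
      have hxle : x ≤ pa := by
        have := F1 z hzu
        omega
      have F2 : q ≤ pa + D - 1 := by omega
      have hpal : l ≤ pa := by omega
      have hnf : ∀ c, c < q → applyStrat D σ0 (s.take u) c < D := by
        intro c hc
        by_contra hge'
        push_neg at hge'
        have := hgreedy u c hulen hge'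
        omega
      have main : ∀ n, n + pa + 1 ≤ q → ∀ r, r ≤ n →
          u + r < s.length ∧ s.getD (u + r) 0 = q - r := by
        intro n
        induction n with
        | zero =>
          intro _ r hr
          have hr0 : r = 0 := Nat.le_zero.1 hr
          subst hr0
          exact ⟨by simpa using hulen, by simpa using hq.symm⟩
        | succ n ihn =>
          intro hle r hr
          have hprior := ihn (by omega)
          by_cases hrn : r ≤ n
          · exact hprior r hrn
          · have hr' : r = n + 1 := by omega
            subst hr'
            clear hrn hr
            set j := q - (n + 1) with hjdef
            have hipa : pa + 1 ≤ j := by omega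
            have hjl : l + 1 ≤ j := by omega
            have hcj : (s.take (u + n + 1)).count j = 0 := by
              apply hcount0
              intro z' hz' hzlen'
              rcases lt_or_ge z' u with h | h
              · have := F1 z' h; omega
              · have h2 := (hprior (z' - u) (by omega)).2
                rw [show u + (z' - u) = z' by omega] at h2
                omega
            have hcj1 : 1 ≤ (s.take (u + n + 1)).count (j + 1) := by
              apply List.count_pos_iff.2
              apply (KSPMaux.mem_take_iff s (u + n + 1) (j + 1)).2
              refine ⟨u + n, by omega, (hprior n le_rfl).1, ?_⟩
              have := (hprior n le_rfl).2
              omega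
            by_cases hA : 1 ≤ τ j + (s.take u).countP (fun i => i + D - 1 = j)
            · -- fireable: j fires at u + n + 1
              have hv := hvalue (u + n + 1) j
              rw [hcj, hσ0_ne j (by omega)] at hv
              have hmono := hcountPmono (fun i => i + D - 1 = j) u (u + n + 1) (by omega)
              have hfire : D ≤ applyStrat D σ0 (s.take (u + n + 1)) j := by
                have h1 : (D - 1) * 1 ≤ (D - 1) * (s.take (u + n + 1)).count (j + 1) :=
                  Nat.mul_le_mul_left (D - 1) hcj1
                omega
              have hlt : u + n + 1 < s.length := by
                by_contra hge'
                push_neg at hge'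
                rw [List.take_of_length_le hge', happly] at hfire
                exact absurd (hstabτ' j) (by omega)
              have hle1 : s.getD (u + n + 1) 0 ≤ j := hgreedy (u + n + 1) j hlt hfire
              have hge1 : j ≤ s.getD (u + n + 1) 0 := by
                by_contra hlt'
                push_neg at hlt'
                have hcd : applyStrat D σ0 (s.take (u + n + 1)) (s.getD (u + n + 1) 0)
                    = applyStrat D σ0 (s.take u) (s.getD (u + n + 1) 0) := by
                  apply huntouched u (u + n + 1) _ (by omega)
                  intro z' hz1 hz2 hz3
                  have h2 := (hprior (z' - u) (by omega)).2
                  rw [show u + (z' - u) = z' by omega] at h2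
                  omega
                have hlv := hlegat (u + n + 1) hlt
                rw [hcd] at hlv
                have := hnf (s.getD (u + n + 1) 0) (by omega)
                omega
              refine ⟨hlt, ?_⟩
              show s.getD (u + n + 1) 0 = q - (n + 1)
              omega
            · -- not immediately fireable: contradiction
              exfalso
              have hτj : τ j = 0 := by omega
              have hcP0 : (s.take u).countP (fun i => i + D - 1 = j) = 0 := by omega
              have hlow : ∀ v, u + n < v → v < s.length → j + 1 ≤ s.getD v 0 := by
                intro v
                induction v using Nat.strong_induction_on with
                | _ v ihv =>
                intro hv1 hv2
                by_contra hlt'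
                push_neg at hlt'
                have hcountPv : (s.take v).countP (fun i => i + D - 1 = j) = 0 := by
                  apply hcountP0
                  intro z' hz1 hz2
                  rcases lt_or_ge z' u with h | h
                  · intro hEq
                    have hz0 := List.countP_eq_zero.1 hcP0 (s.getD z' 0)
                      ((KSPMaux.mem_take_iff s u _).2 ⟨z', h, hz2, rfl⟩)
                    simp only [decide_eq_true_eq] at hz0
                    exact hz0 hEq
                  · rcases lt_or_ge z' (u + n + 1) with h2 | h2
                    · have h3 := (hprior (z' - u) (by omega)).2
                      rw [show u + (z' - u) = z' by omega] at h3
                      omega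
                    · have := ihv z' hz1 (by omega) hz2
                      omega
                have hne_j : s.getD v 0 ≠ j := by
                  intro hEq
                  have hlv := hlegat v hv2
                  have hv' := hvalue v j
                  have hc1 : (s.take v).count (j + 1) ≤ 1 := hcnt_le1 v (j + 1)
                  rw [hσ0_ne j (by omega), hcountPv] at hv'
                  have h1 : (D - 1) * (s.take v).count (j + 1) ≤ (D - 1) * 1 :=
                    Nat.mul_le_mul_left (D - 1) hc1
                  rw [hEq] at hlv
                  omega
                have hcd : applyStrat D σ0 (s.take v) (s.getD v 0)
                    = applyStrat D σ0 (s.take u) (s.getD v 0) := by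
                  apply huntouched u v _ (by omega)
                  intro z' hz1 hz2 hz3
                  rcases lt_or_ge z' (u + n + 1) with h2 | h2
                  · have h3 := (hprior (z' - u) (by omega)).2
                    rw [show u + (z' - u) = z' by omega] at h3
                    omega
                  · have := ihv z' hz2 (by omega) hz3
                    omega
                have hlv := hlegat v hv2
                rw [hcd] at hlv
                have := hnf (s.getD v 0) (by omega)
                omega
              rcases lt_or_ge j (l + D - 1) with hjw | hjw
              · -- j is in the fired window
                obtain ⟨w, hwlen, hwgd⟩ := hmem_idx j (hl j (by omega) hjw)
                rcases lt_or_ge w u with h | h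
                · have := F1 w h; omega
                rcases lt_or_ge w (u + n + 1) with h2 | h2
                · have h3 := (hprior (w - u) (by omega)).2
                  rw [show u + (w - u) = w by omega] at h3
                  omega
                · have := hlow w (by omega) hwlen
                  omega
              · -- j ≥ l + D - 1: its left source j + 1 - D is in [l, pa], hence fired
                have hreach := (ihu ta hta hpka).2 (by rw [hpa]; omega)
                  (j + 1 - D) (by omega) (by rw [hpa]; omega)
                obtain ⟨y, hylen, hygd⟩ := hmem_idx (j + 1 - D) hreach
                rcases lt_or_ge y u with h | h
                · have hpos : 0 < (s.take u).countP (fun i => i + D - 1 = j) := by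
                    apply List.countP_pos_iff.2
                    refine ⟨j + 1 - D, (KSPMaux.mem_take_iff s u _).2 ⟨y, h, hylen, hygd⟩, ?_⟩
                    simp only [decide_eq_true_eq]
                    omega
                  omega
                rcases lt_or_ge y (u + n + 1) with h2 | h2
                · have h3 := (hprior (y - u) (by omega)).2
                  rw [show u + (y - u) = y by omega] at h3
                  omega
                · have := hlow y (by omega) hylen
                  omega
      intro m hm
      exact main m hm m le_rfl
    refine ⟨hdesc, ?_⟩
    intro hlu c hlc hcu
    rcases lt_or_ge (s.getD u 0) (l + D - 1) with hsmall | hbig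
    · exact hl c hlc (by omega)
    · have hu0 : 0 < u := by
        rcases Nat.eq_zero_or_pos u with h0 | h
        · exfalso
          have h1 := hfirst (by omega)
          rw [h0] at hbig
          omega
        · exact h
      have hpk0 : IsPeak s 0 :=
        ⟨lt_of_le_of_lt (Nat.zero_le u) hulen, fun t' ht' => absurd ht' (Nat.not_lt_zero t')⟩
      set ta := Nat.findGreatest (fun v => IsPeak s v) (u - 1) with htadef
      have hta_pk : IsPeak s ta := Nat.findGreatest_spec (m := 0) (Nat.zero_le _) hpk0
      have hta_le : ta ≤ u - 1 := Nat.findGreatest_le _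
      have hta_lt : ta < u := by omega
      have hta_prev : ∀ v, ta < v → v < u → ¬ IsPeak s v := by
        intro v hv1 hv2
        exact Nat.findGreatest_is_greatest hv1 (by omega)
      have hpalt : s.getD ta 0 < s.getD u 0 := hpk.2 ta hta_lt
      rcases le_or_gt c (s.getD ta 0) with hcle | hcgt
      · exact (ihu ta hta_lt hta_pk).2 (by omega) c hlc hcle
      · rcases eq_or_lt_of_le hcu with hceq | hclt
        · have := hgd_mem u hulen
          rwa [← hceq] at this
        · have hdm := hdesc ta (s.getD ta 0) hta_pk hta_lt rfl hta_prev hbig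
            (s.getD u 0 - c) (by omega)
          have hcs : s.getD (u + (s.getD u 0 - c)) 0 = c := by
            have := hdm.2
            omega
          rw [← hcs]
          exact hgd_mem _ hdm.1
  have hd := (key t hpeak).1 t0 pim hpeak0 ht0 hpim hprev (by rw [hpi]; exact hpige)
  have hpimlt : pim < pi := by
    have := hpeak.2 t0 ht0
    omega
  constructor
  · have h1 := hd (pi - pim - 1) (by rw [hpi]; omega)
    omega
  · intro v hv1 hv2
    have h1 := hd (v - t) (by rw [hpi]; omega)
    rw [hpi] at h1
    rw [show t + (v - t) = v by omega] at h1
    have h2 := hd (v - t - 1) (by rw [hpi]; omega)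
    rw [hpi] at h2
    rw [show t + (v - t - 1) = v - 1 by omega] at h2
    omega
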